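/- Let G = (V, E) be a finite directed graph, ℓ ≥ 2, and let t₁, …, t_ℓ ∈ V be distinct terminals. Construct G* on vertex set V ∪ {r₁, …, r_ℓ} ∪ {s₁, …, s_ℓ} (the r_i and s_i being 2ℓ new distinct vertices) with edge set E* = E ∪ {(r_i, t_i) : i ∈ [ℓ]} ∪ {(t_i, s_i) : i ∈ [ℓ]}, and let T* = {(r_i, s_j) : 1 ≤ i, j ≤ ℓ, i ≠ j}. Then for every integer p: there exists E' ⊆ E with |E'| ≤ p such that for every ordered pair of distinct terminals t_i, t_j, t_j is E'-reachable from t_i, if and only if there exists E'' ⊆ E* with |E''| ≤ p + 2ℓ such that for every (r_i, s_j) ∈ T*, s_j is E''-reachable from r_i. -/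

import Mathlib

/-- `b` is `E'`-reachable from `a`: there is a (possibly empty) directed path
from `a` to `b` all of whose edges lie in `E'`. -/
def Reach {V : Type} (E' : Finset (V × V)) (a b : V) : Prop :=
  Relation.ReflTransGen (fun x y => (x, y) ∈ E') a b

/-- Correctness of the reduction from Strongly Connected Steiner Subgraph with
terminals `t₁, …, t_ℓ` to Directed Steiner Forest: in the graph `G*` obtained
from `G` by adding new vertices `r_i, s_i` and edges `(r_i, t_i)`, `(t_i, s_i)`,
with terminal pairs `T* = {(r_i, s_j) : i ≠ j}`, the SCSS instance has a
solution of size `≤ p` iff the DSF instance has a solution of size `≤ p + 2ℓ`.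
Here the vertices of `G*` are `V ⊕ Fin ℓ ⊕ Fin ℓ`, with `Sum.inl w` the
original vertices, `Sum.inr (Sum.inl i) = r_i` and `Sum.inr (Sum.inr i) = s_i`. -/
theorem stmt_10 {V : Type} [Fintype V] [DecidableEq V]
    (E : Finset (V × V)) (ℓ : ℕ) (hℓ : 2 ≤ ℓ)
    (t : Fin ℓ → V) (ht : Function.Injective t)
    (Estar : Finset ((V ⊕ (Fin ℓ ⊕ Fin ℓ)) × (V ⊕ (Fin ℓ ⊕ Fin ℓ))))
    (hEstar : Estar =
      E.image (fun e => (Sum.inl e.1, Sum.inl e.2)) ∪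
      Finset.univ.image (fun i : Fin ℓ => (Sum.inr (Sum.inl i), Sum.inl (t i))) ∪
      Finset.univ.image (fun i : Fin ℓ => (Sum.inl (t i), Sum.inr (Sum.inr i))))
    (p : ℕ) :
    (∃ E' ⊆ E, E'.card ≤ p ∧
        ∀ i j : Fin ℓ, i ≠ j → Reach E' (t i) (t j)) ↔
    (∃ E'' ⊆ Estar, E''.card ≤ p + 2 * ℓ ∧
        ∀ i j : Fin ℓ, i ≠ j →
          Reach E'' (Sum.inr (Sum.inl i)) (Sum.inr (Sum.inr j))) := by
  classical
  subst hEstar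
  set f : V × V → (V ⊕ (Fin ℓ ⊕ Fin ℓ)) × (V ⊕ (Fin ℓ ⊕ Fin ℓ)) :=
    fun e => (Sum.inl e.1, Sum.inl e.2) with hf
  have hfinj : Function.Injective f := by
    intro a b hab
    simp only [hf, Prod.mk.injEq, Sum.inl.injEq] at hab
    exact Prod.ext hab.1 hab.2
  set N : Finset ((V ⊕ (Fin ℓ ⊕ Fin ℓ)) × (V ⊕ (Fin ℓ ⊕ Fin ℓ))) :=
    Finset.univ.image (fun i : Fin ℓ => (Sum.inr (Sum.inl i), Sum.inl (t i))) ∪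
    Finset.univ.image (fun i : Fin ℓ => (Sum.inl (t i), Sum.inr (Sum.inr i))) with hN
  have hNcard : N.card = 2 * ℓ := by
    rw [hN, Finset.card_union_of_disjoint]
    · rw [Finset.card_image_of_injective _ (fun a b h => by
          simp only [Prod.mk.injEq, Sum.inr.injEq, Sum.inl.injEq] at h; exact h.1),
        Finset.card_image_of_injective _ (fun a b h => by
          simp only [Prod.mk.injEq, Sum.inr.injEq, Sum.inl.injEq] at h; exact ht h.1)]
      simp [two_mul]
    · simp only [Finset.disjoint_left, Finset.mem_image, Finset.mem_univ, true_and]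
      rintro ⟨x, y⟩ ⟨i, hi⟩ ⟨j, hj⟩
      rw [← hj] at hi
      simp at hi
  constructor
  · rintro ⟨E', hsub, hcard, hreach⟩
    refine ⟨E'.image f ∪ N, ?_, ?_, ?_⟩
    · rw [Finset.union_assoc]
      exact Finset.union_subset_union (Finset.image_subset_image hsub) le_rfl
    · calc (E'.image f ∪ N).card ≤ (E'.image f).card + N.card := Finset.card_union_le _ _
        _ ≤ p + 2 * ℓ := by
          rw [hNcard]
          exact Nat.add_le_add (le_trans (Finset.card_image_le) hcard) le_rfl
    · intro i j hij
      have hmid : Relation.ReflTransGen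
          (fun x y => (x, y) ∈ E'.image f ∪ N) (Sum.inl (t i)) (Sum.inl (t j)) := by
        refine Relation.ReflTransGen.lift Sum.inl ?_ _ _ (hreach i j hij)
        intro a b hab
        simp only [Finset.mem_union, Finset.mem_image]
        exact Or.inl ⟨(a, b), hab, rfl⟩
      refine Relation.ReflTransGen.head ?_ (hmid.tail ?_)
      · simp [hN]
      · simp [hN]
  · rintro ⟨E'', hsub, hcard, hreach⟩
    set E' : Finset (V × V) := E.filter (fun e => f e ∈ E'') with hE'
    -- no edges out of s_k
    have hsink : ∀ (k : Fin ℓ) (b), Relation.ReflTransGen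
        (fun x y => (x, y) ∈ E'') (Sum.inr (Sum.inr k)) b → b = Sum.inr (Sum.inr k) := by
      intro k b h
      rcases h.cases_head with h | ⟨c, hc, _⟩
      · exact h.symm
      · exfalso
        have := hsub hc
        simp [hf] at this
    -- classify edges out of r_i
    have hr : ∀ (i : Fin ℓ) c, (Sum.inr (Sum.inl i), c) ∈ E'' → c = Sum.inl (t i) := by
      intro i c hc
      have := hsub hc
      simp only [Finset.mem_union, Finset.mem_image, Finset.mem_univ, true_and,
        Prod.mk.injEq, hf] at this
      rcases this with (⟨e, _, he, _⟩ | ⟨k, hk1, hk2⟩) | ⟨k, hk1, hk2⟩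
      · simp at he
      · obtain rfl : k = i := by simpa using hk1
        exact hk2.symm
      · simp at hk1
    -- classify edges into s_j
    have hs : ∀ (j : Fin ℓ) c, (c, Sum.inr (Sum.inr j)) ∈ E'' → c = Sum.inl (t j) := by
      intro j c hc
      have := hsub hc
      simp only [Finset.mem_union, Finset.mem_image, Finset.mem_univ, true_and,
        Prod.mk.injEq, hf] at this
      rcases this with (⟨e, _, _, he⟩ | ⟨k, hk1, hk2⟩) | ⟨k, hk1, hk2⟩
      · simp at he
      · simp at hk2
      · obtain rfl : k = j := by simpa using hk2
        exact hk1.symm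
    -- main extraction
    have hext : ∀ (j : Fin ℓ) a, Relation.ReflTransGen
        (fun x y => (x, y) ∈ E'') a (Sum.inr (Sum.inr j)) →
        ∀ w : V, a = Sum.inl w → Reach E' w (t j) := by
      intro j a h
      induction h using Relation.ReflTransGen.head_induction_on with
      | refl => intro w hw; exact absurd hw (by simp)
      | head hac hcb ih =>
        rename_i x c
        intro w hw
        subst hw
        have hmem := hsub hac
        simp only [Finset.mem_union, Finset.mem_image, Finset.mem_univ, true_and,
          Prod.mk.injEq, hf] at hmem
        rcases hmem with (⟨e, heE, he1, he2⟩ | ⟨k, hk1, hk2⟩) | ⟨k, hk1, hk2⟩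
        · have hw1 : e.1 = w := by simpa using he1
          refine Relation.ReflTransGen.head ?_ (ih e.2 he2.symm)
          show (w, e.2) ∈ E'
          rw [hE', Finset.mem_filter]
          subst hw1
          refine ⟨heE, ?_⟩
          rw [← he2] at hac
          simpa [hf] using hac
        · simp at hk1
        · have := hsink k _ (hk2 ▸ hcb)
          obtain rfl : k = j := by simpa using this.symm
          obtain rfl : t k = w := by simpa using hk1
          exact Relation.ReflTransGen.refl
    have hNsub : N ⊆ E'' := by
      intro x hx
      simp only [hN, Finset.mem_union, Finset.mem_image, Finset.mem_univ, true_and] at hx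
      rcases hx with ⟨i, rfl⟩ | ⟨i, rfl⟩
      · obtain ⟨j, hj⟩ := Fintype.exists_ne_of_one_lt_card (by rw [Fintype.card_fin]; omega) i
        have h : Relation.ReflTransGen (fun x y => (x, y) ∈ E'')
            (Sum.inr (Sum.inl i)) (Sum.inr (Sum.inr j)) := hreach i j (Ne.symm hj)
        rcases h.cases_head with h0 | ⟨c, hc, _⟩
        · exact absurd h0 (by simp)
        · rwa [hr i c hc] at hc
      · obtain ⟨j, hj⟩ := Fintype.exists_ne_of_one_lt_card (by rw [Fintype.card_fin]; omega) i
        have h : Relation.ReflTransGen (fun x y => (x, y) ∈ E'')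
            (Sum.inr (Sum.inl j)) (Sum.inr (Sum.inr i)) := hreach j i hj
        rcases h.cases_tail with h0 | ⟨c, _, hc⟩
        · exact absurd h0 (by simp)
        · rwa [hs i c hc] at hc
    have hcard' : E'.card ≤ p := by
      have hdisj : Disjoint (E'.image f) N := by
        simp only [hN, Finset.disjoint_left, Finset.mem_image, Finset.mem_union,
          Finset.mem_univ, true_and]
        rintro x ⟨e, _, rfl⟩ (⟨i, hi⟩ | ⟨i, hi⟩) <;> simp [hf] at hi
      have hsub2 : E'.image f ∪ N ⊆ E'' := by
        apply Finset.union_subset _ hNsub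
        intro x hx
        simp only [Finset.mem_image] at hx
        obtain ⟨e, he, rfl⟩ := hx
        rw [hE', Finset.mem_filter] at he
        exact he.2
      have := Finset.card_le_card hsub2
      rw [Finset.card_union_of_disjoint hdisj, hNcard,
        Finset.card_image_of_injective _ hfinj] at this
      omega
    refine ⟨E', Finset.filter_subset _ _, hcard', ?_⟩
    intro i j hij
    have h : Relation.ReflTransGen (fun x y => (x, y) ∈ E'')
        (Sum.inr (Sum.inl i)) (Sum.inr (Sum.inr j)) := hreach i j hij
    rcases h.cases_head with h0 | ⟨c, hc, hcb⟩
    · exact absurd h0 (by simp)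
    · rw [hr i c hc] at hcb
      exact hext j _ hcb (t i) rfl
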